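/- The set of Reg-continuous functions over a one-letter alphabet is uncountable. Precisely, the set {f : {a}* → {a}* | for every regular language L ⊆ {a}*, the preimage f⁻¹(L) is regular} is not countable. -/

import Mathlib

/-- Any word over `Unit` is a replicate. -/
lemma unit_word_eq (w : List Unit) : w = List.replicate w.length () := by
  apply List.eq_replicate_of_mem; intro b _; rfl

/-- A DFA over `Unit` that counts the length of the input, capped at `B`. -/
def capDFA (P : Language Unit) (B : ℕ) (b : Prop) : DFA Unit (Fin (B + 1)) where
  step q _ := ⟨min (q.val + 1) B, by omega⟩
  start := ⟨0, by omega⟩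
  accept := {q | if q.val < B then List.replicate q.val () ∈ P else b}

lemma capDFA_eval (P : Language Unit) (B : ℕ) (b : Prop) :
    ∀ (w : List Unit) (k : ℕ), k ≤ B →
      (capDFA P B b).evalFrom ⟨min k B, by omega⟩ w = ⟨min (k + w.length) B, by omega⟩ := by
  intro w
  induction w with
  | nil => intro k hk; simp
  | cons a w ih =>
    intro k hk
    have hstep : (capDFA P B b).evalFrom (⟨min k B, by omega⟩ : Fin (B+1)) (a :: w) =
        (capDFA P B b).evalFrom (⟨min (k+1) B, by omega⟩ : Fin (B+1)) w := by
      show (capDFA P B b).evalFrom ((capDFA P B b).step _ a) w = _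
      congr 1
      simp [capDFA]
      omega
    rw [hstep]
    rcases le_or_gt (k+1) B with hk1 | hk1
    · rw [ih (k+1) hk1]; congr 1; simp; omega
    · have h1 : (⟨min (k+1) B, by omega⟩ : Fin (B+1)) = ⟨min B B, by omega⟩ := by
        apply Fin.ext; simp; omega
      rw [h1, ih B le_rfl]; apply Fin.ext; simp; omega

/-- Languages over `Unit` whose membership is eventually constant in length are regular. -/
lemma eventually_constant_regular (P : Language Unit) (B : ℕ) (b : Prop)
    (h : ∀ w : List Unit, B ≤ w.length → (w ∈ P ↔ b)) : P.IsRegular := by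
  refine ⟨Fin (B + 1), inferInstance, capDFA P B b, ?_⟩
  ext w
  rw [DFA.mem_accepts]
  have he : (capDFA P B b).eval w = (⟨min (0 + w.length) B, by omega⟩ : Fin (B+1)) := by
    show (capDFA P B b).evalFrom (capDFA P B b).start w = _
    have hstart : (capDFA P B b).start = (⟨min 0 B, by omega⟩ : Fin (B+1)) := by
      apply Fin.ext; simp [capDFA]
    rw [hstart, capDFA_eval P B b w 0 (by omega)]
  rw [he]
  show (if min (0 + w.length) B < B then List.replicate (min (0 + w.length) B) () ∈ P else b) ↔ _
  rcases lt_or_ge w.length B with hw | hw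
  · rw [if_pos (by omega : min (0 + w.length) B < B)]
    conv_rhs => rw [unit_word_eq w]
    congr! 2
    omega
  · rw [if_neg (by omega : ¬ min (0 + w.length) B < B)]
    exact (h w hw).symm

/-- The family of candidate functions. -/
noncomputable def fg (g : ℕ → Bool) : List Unit → List Unit :=
  fun w => List.replicate ((if g w.length then 2 else 1) * Nat.factorial w.length) ()

lemma fg_regcont (g : ℕ → Bool) :
    ∀ L : Language Unit, L.IsRegular →
      Language.IsRegular {w : List Unit | fg g w ∈ L} := by
  intro L hL
  obtain ⟨σ, _, M, hM⟩ := hL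
  classical
  set q : ℕ → σ := fun n => M.evalFrom M.start (List.replicate n ()) with hq
  have qsucc : ∀ n, q (n + 1) = M.step (q n) () := by
    intro n
    simp only [hq]
    rw [List.replicate_add, List.replicate_one, DFA.evalFrom_append_singleton]
  have hninj : ¬ Function.Injective fun n : Fin (Fintype.card σ + 1) => q n.val := by
    intro hinj
    have := Fintype.card_le_of_injective _ hinj
    simp at this
  obtain ⟨n1, n2, hqeq, hne⟩ := Function.not_injective_iff.mp hninj
  obtain ⟨i, j, hij, hqij⟩ : ∃ i j : ℕ, i < j ∧ q i = q j := by
    rcases lt_or_gt_of_ne (fun h => hne (Fin.ext h)) with h | h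
    · exact ⟨n1, n2, h, hqeq⟩
    · exact ⟨n2, n1, h, hqeq.symm⟩
  set d := j - i with hd
  have hd0 : 0 < d := by omega
  have per : ∀ m, i ≤ m → q (m + d) = q m := by
    intro m hm
    induction m with
    | zero =>
      have hi0 : i = 0 := by omega
      subst hi0
      simpa [hd, Nat.sub_zero] using hqij.symm
    | succ m ih =>
      rcases Nat.lt_or_ge m i with hmi | hmi
      · have hieq : i = m + 1 := by omega
        subst hieq
        have hj : m + 1 + d = j := by omega
        rw [hj]; exact hqij.symm
      · rw [show m + 1 + d = (m + d) + 1 from by omega, qsucc, qsucc, ih hmi]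
  have perk : ∀ m, i ≤ m → ∀ k, q (m + k * d) = q m := by
    intro m hm k
    induction k with
    | zero => simp
    | succ k ih =>
      rw [show m + (k+1) * d = (m + k * d) + d from by ring]
      rw [per _ (by omega), ih]
  set r := d * (i + 1) with hr
  have hdr : d ∣ r := ⟨i + 1, rfl⟩
  have hir : i ≤ r := by
    have : i + 1 ≤ d * (i + 1) := Nat.le_mul_of_pos_left _ hd0
    omega
  have qconst : ∀ m, d ∣ m → r ≤ m → q m = q r := by
    intro m hdm hrm
    obtain ⟨k, hk⟩ : d ∣ m - r := Nat.dvd_sub hdm hdr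
    have hm : m = r + k * d := by rw [mul_comm]; omega
    rw [hm, perk r hir k]
  set B := max r d + 1 with hB
  apply eventually_constant_regular _ B (q r ∈ M.accept)
  intro w hw
  set n := w.length with hn
  have hnd : d ≤ n := by omega
  have hnr : r ≤ n := by omega
  have hmem : fg g w ∈ L ↔ q ((if g n then 2 else 1) * Nat.factorial n) ∈ M.accept := by
    rw [← hM]
    rfl
  change fg g w ∈ L ↔ _
  rw [hmem]
  have hdvd : d ∣ (if g n then 2 else 1) * Nat.factorial n :=
    Dvd.dvd.mul_left (Nat.dvd_factorial hd0 hnd) _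
  have hge : r ≤ (if g n then 2 else 1) * Nat.factorial n := by
    have h1 : n ≤ Nat.factorial n := Nat.self_le_factorial n
    have h2 : Nat.factorial n ≤ (if g n then 2 else 1) * Nat.factorial n := by
      split <;> omega
    omega
  rw [qconst _ hdvd hge]

/-- The set of Reg-continuous functions over a one-letter alphabet is uncountable. -/
theorem uncountably_many_reg_continuous :
    ¬ Set.Countable {f : List Unit → List Unit |
      ∀ L : Language Unit, L.IsRegular →
        Language.IsRegular {w : List Unit | f w ∈ L} } := by
  classical
  intro hcnt
  have hmem : ∀ g : ℕ → Bool, fg g ∈ {f : List Unit → List Unit |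
      ∀ L : Language Unit, L.IsRegular →
        Language.IsRegular {w : List Unit | f w ∈ L} } := fun g => fg_regcont g
  have hinj : Function.Injective fun g : ℕ → Bool =>
      (⟨fg g, hmem g⟩ : {f : List Unit → List Unit |
      ∀ L : Language Unit, L.IsRegular →
        Language.IsRegular {w : List Unit | f w ∈ L} }) := by
    intro g1 g2 h
    funext n
    have hfg : fg g1 = fg g2 := congrArg Subtype.val h
    have h2 := congrFun hfg (List.replicate n ())
    simp only [fg, List.length_replicate] at h2
    have hlen := congrArg List.length h2
    simp only [List.length_replicate] at hlen
    have hf : 0 < Nat.factorial n := Nat.factorial_pos n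
    by_contra hne
    rcases Bool.eq_false_or_eq_true (g1 n) with h1 | h1 <;>
      rcases Bool.eq_false_or_eq_true (g2 n) with hb2 | hb2 <;>
      simp [h1, hb2] at hlen hne <;> omega
  have hC1 : Countable {f : List Unit → List Unit |
      ∀ L : Language Unit, L.IsRegular →
        Language.IsRegular {w : List Unit | f w ∈ L} } := hcnt.to_subtype
  have hC2 : Countable (ℕ → Bool) := Function.Injective.countable hinj
  -- Cantor
  have hinjS : Function.Injective fun S : Set ℕ => (fun n => decide (n ∈ S) : ℕ → Bool) := by
    intro S T h
    ext n
    have := congrFun h n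
    simpa using this
  have hC3 : Countable (Set ℕ) := Function.Injective.countable hinjS
  obtain ⟨f, hf⟩ := exists_injective_nat (Set ℕ)
  exact Function.cantor_injective f hf
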